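/- arXiv:2009.14047 — 5 statements merged into one kernel-verified Lean document; each statement's English description precedes it below -/
import Mathlib

section
/- Let x₁, x₂ ∈ ℝ with 0 ≤ x₁ ⊥ x₂ ≥ 0 (i.e., x₁ ≥ 0, x₂ ≥ 0, x₁x₂ = 0), and let Δ > 0 with 0 ≤ x₁ ≤ Δ and x₂ = 0 (case A). Then for any g₁, g₂ ∈ ℝ, the minimum of g₁d₁ + g₂d₂ over the feasible set F := {(d₁,d₂) : x₁+d₁ ≥ 0, x₂+d₂ ≥ 0, (x₁+d₁)(x₂+d₂) = 0, max(|d₁|,|d₂|) ≤ Δ} is attained at one of the four points (0,0), (Δ,0), (−x₁,0), (−x₁,Δ). -/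
/-- Case A of the 2D trust-region LPCC: the minimum is attained at one of four points. -/
theorem stmt_2 (x1 x2 Δ g1 g2 : ℝ) (h1 : 0 ≤ x1) (h2 : 0 ≤ x2) (hc : x1 * x2 = 0)
    (hΔ : 0 < Δ) (hA1 : x1 ≤ Δ) (hA2 : x2 = 0) :
    ∃ d ∈ ({((0 : ℝ), (0 : ℝ)), (Δ, 0), (-x1, 0), (-x1, Δ)} : Set (ℝ × ℝ)),
      d ∈ {e : ℝ × ℝ | 0 ≤ x1 + e.1 ∧ 0 ≤ x2 + e.2 ∧ (x1 + e.1) * (x2 + e.2) = 0 ∧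
              max |e.1| |e.2| ≤ Δ} ∧
      ∀ e ∈ {e : ℝ × ℝ | 0 ≤ x1 + e.1 ∧ 0 ≤ x2 + e.2 ∧ (x1 + e.1) * (x2 + e.2) = 0 ∧
              max |e.1| |e.2| ≤ Δ},
        g1 * d.1 + g2 * d.2 ≤ g1 * e.1 + g2 * e.2 := by
  subst hA2
  -- lower bound for all feasible points
  have hbound : ∀ e : ℝ × ℝ, 0 ≤ x1 + e.1 → 0 ≤ (0:ℝ) + e.2 →
      (x1 + e.1) * (0 + e.2) = 0 → max |e.1| |e.2| ≤ Δ →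
      min (min (g1 * (-x1)) (g1 * Δ)) (g1 * (-x1) + g2 * Δ) ≤ g1 * e.1 + g2 * e.2 := by
    intro e he1 he2 hce hm
    have hd1u : e.1 ≤ Δ := le_trans (le_abs_self _) (le_trans (le_max_left _ _) hm)
    have hd2u : e.2 ≤ Δ := le_trans (le_abs_self _) (le_trans (le_max_right _ _) hm)
    have he2' : (0:ℝ) ≤ e.2 := by linarith
    rcases mul_eq_zero.mp hce with h | h
    · -- e.1 = -x1
      have h1' : e.1 = -x1 := by linarith
      rcases le_total g2 0 with hg | hg
      · refine le_trans (min_le_right _ _) ?_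
        rw [h1']
        nlinarith
      · refine le_trans (min_le_of_left_le (min_le_left _ _)) ?_
        rw [h1']
        nlinarith
    · -- e.2 = 0
      have h2' : e.2 = 0 := by linarith
      rcases le_total g1 0 with hg | hg
      · refine le_trans (min_le_of_left_le (min_le_right _ _)) ?_
        rw [h2']
        nlinarith
      · refine le_trans (min_le_of_left_le (min_le_left _ _)) ?_
        rw [h2']
        nlinarith
  have habs1 : |(-x1)| = x1 := by rw [abs_neg, abs_of_nonneg h1]
  have habsΔ : |Δ| = Δ := abs_of_pos hΔ
  have habs0 : |(0:ℝ)| = 0 := abs_zero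
  rcases le_total (min (g1 * (-x1)) (g1 * Δ)) (g1 * (-x1) + g2 * Δ) with h3 | h3
  · rcases le_total (g1 * (-x1)) (g1 * Δ) with h4 | h4
    · -- candidate (-x1, 0)
      refine ⟨(-x1, 0), by simp, ?_, ?_⟩
      · constructor
        · simp
        constructor
        · simp
        constructor
        · ring
        · simp only [habs1, habs0]
          exact max_le hA1 hΔ.le
      · intro e ⟨he1, he2, hce, hm⟩
        have := hbound e he1 he2 hce hm
        rw [min_eq_left h3, min_eq_left h4] at this
        simpa using this
    · -- candidate (Δ, 0)
      refine ⟨(Δ, 0), by simp, ?_, ?_⟩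
      · refine ⟨by simp; linarith, by simp, by ring, ?_⟩
        simp only [habsΔ, habs0]
        exact max_le le_rfl hΔ.le
      · intro e ⟨he1, he2, hce, hm⟩
        have := hbound e he1 he2 hce hm
        rw [min_eq_right h4, min_eq_left (le_trans (le_min h4 le_rfl) h3)] at this
        · simpa using this
  · -- candidate (-x1, Δ)
    refine ⟨(-x1, Δ), by simp, ?_, ?_⟩
    · refine ⟨by simp, by simp; linarith, by ring, ?_⟩
      simp only [habs1, habsΔ]
      exact max_le hA1 le_rfl
    · intro e ⟨he1, he2, hce, hm⟩
      have := hbound e he1 he2 hce hm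
      rw [min_eq_right h3] at this
      simpa using this
end

section
/- Let f : ℝⁿ → ℝ be differentiable with ∇f Lipschitz continuous with constant M on an open convex set containing the segment [y, y+d]. Then f(y) − f(y + d) ≥ −∇f(y)ᵀd − (M/2)‖d‖²_∞, where the Lipschitz property is taken as ‖∇f(u) − ∇f(v)‖₁ ≤ M‖u − v‖_∞. -/
/-- Descent estimate (Lemma 4.4): with an `ℓ₁`–`ℓ∞` Lipschitz gradient with constant `M`
on an open convex set containing the segment `[y, y + d]`,
`f(y) − f(y+d) ≥ −∇f(y)ᵀd − (M/2)‖d‖²_∞`. -/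
theorem stmt_5 (n : ℕ) (f : (Fin n → ℝ) → ℝ) (g : (Fin n → ℝ) → (Fin n → ℝ))
    (U : Set (Fin n → ℝ)) (hU : IsOpen U) (hconv : Convex ℝ U)
    (y d : Fin n → ℝ) (hseg : segment ℝ y (y + d) ⊆ U) (M : ℝ)
    (hderiv : ∀ z ∈ U, HasFDerivAt f
      (∑ i, g z i • (ContinuousLinearMap.proj i : (Fin n → ℝ) →L[ℝ] ℝ)) z)
    (hLip : ∀ a ∈ U, ∀ b ∈ U, ∑ i, |g a i - g b i| ≤ M * ‖a - b‖) :
    f y - f (y + d) ≥ -(∑ i, g y i * d i) - M / 2 * ‖d‖ ^ 2 := by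
  set γ : ℝ → (Fin n → ℝ) := fun t => y + t • d with hγ
  have hmem : ∀ t ∈ Set.Icc (0:ℝ) 1, γ t ∈ U := by
    intro t ht
    apply hseg
    rw [segment_eq_image']
    exact ⟨t, ht, by simp [hγ]⟩
  set h' : ℝ → ℝ := fun t => ∑ i, g (γ t) i * d i with hh'
  have hderivγ : ∀ t ∈ Set.Icc (0:ℝ) 1, HasDerivAt (fun t => f (γ t)) (h' t) t := by
    intro t ht
    have h1 : HasDerivAt γ d t := by
      exact (((hasDerivAt_id t).smul_const d).const_add y).congr_deriv (one_smul ℝ d)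
    have h2 := (hderiv (γ t) (hmem t ht)).comp_hasDerivAt t h1
    refine h2.congr_deriv ?_
    simp [hh', ContinuousLinearMap.sum_apply, smul_eq_mul]
  -- continuity of h' on [0,1]
  have hgcont : ∀ i, ContinuousOn (fun z => g z i) U := by
    intro i
    apply LipschitzOnWith.continuousOn (K := Real.toNNReal M)
    intro a ha b hb
    rw [edist_dist, edist_dist, dist_eq_norm]
    have h1 : |g a i - g b i| ≤ M * ‖a - b‖ := by
      calc |g a i - g b i| ≤ ∑ j, |g a j - g b j| :=
            Finset.single_le_sum (f := fun j => |g a j - g b j|)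
              (fun j _ => abs_nonneg _) (Finset.mem_univ i)
        _ ≤ M * ‖a - b‖ := hLip a ha b hb
    have h2 : |g a i - g b i| ≤ (Real.toNNReal M : ℝ) * ‖a - b‖ := by
      rcases le_total M 0 with hM | hM
      · have : M * ‖a - b‖ ≤ 0 := mul_nonpos_of_nonpos_of_nonneg hM (norm_nonneg _)
        have := le_trans h1 this
        have h0 : |g a i - g b i| = 0 := le_antisymm this (abs_nonneg _)
        rw [h0]
        positivity
      · calc |g a i - g b i| ≤ M * ‖a - b‖ := h1
          _ ≤ (Real.toNNReal M : ℝ) * ‖a - b‖ := by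
              apply mul_le_mul_of_nonneg_right _ (norm_nonneg _)
              simp [Real.coe_toNNReal', le_max_left]
    calc ENNReal.ofReal (dist (g a i) (g b i)) ≤ ENNReal.ofReal ((Real.toNNReal M : ℝ) * dist a b) := by
          apply ENNReal.ofReal_le_ofReal
          rw [Real.dist_eq, dist_eq_norm]; exact h2
      _ = (Real.toNNReal M) * ENNReal.ofReal (dist a b) := by
          rw [ENNReal.ofReal_mul (by positivity), ENNReal.ofReal_coe_nnreal]
  have hγcont : Continuous γ := continuous_const.add (continuous_id.smul continuous_const)
  have hcont : ContinuousOn h' (Set.Icc 0 1) := by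
    apply continuousOn_finset_sum
    intro i _
    exact (((hgcont i).comp hγcont.continuousOn hmem)).mul continuousOn_const
  have hint : IntervalIntegrable h' MeasureTheory.volume 0 1 := by
    apply ContinuousOn.intervalIntegrable
    rwa [Set.uIcc_of_le (by norm_num)]
  have heq : ∫ t in (0:ℝ)..1, h' t = f (y + d) - f y := by
    have := intervalIntegral.integral_eq_sub_of_hasDerivAt (f := fun t => f (γ t))
      (f' := h') (a := 0) (b := 1)
      (fun t ht => hderivγ t (by rwa [Set.uIcc_of_le (by norm_num)] at ht)) hint
    simpa [hγ] using this
  -- pointwise bound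
  set L : ℝ := ∑ i, g y i * d i with hL
  have hbound : ∀ t ∈ Set.Icc (0:ℝ) 1, h' t ≤ L + M * ‖d‖ ^ 2 * t := by
    intro t ht
    have hy : y ∈ U := hseg (left_mem_segment ℝ y (y + d))
    have key : h' t - L ≤ M * ‖d‖ ^ 2 * t := by
      have : h' t - L = ∑ i, (g (γ t) i - g y i) * d i := by
        rw [hh', hL, ← Finset.sum_sub_distrib]
        congr 1; ext i; ring
      rw [this]
      calc ∑ i, (g (γ t) i - g y i) * d i ≤ ∑ i, |g (γ t) i - g y i| * ‖d‖ := by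
            apply Finset.sum_le_sum
            intro i _
            calc (g (γ t) i - g y i) * d i ≤ |(g (γ t) i - g y i) * d i| := le_abs_self _
              _ = |g (γ t) i - g y i| * |d i| := abs_mul _ _
              _ ≤ |g (γ t) i - g y i| * ‖d‖ := by
                  apply mul_le_mul_of_nonneg_left _ (abs_nonneg _)
                  exact (norm_le_pi_norm d i)
        _ = (∑ i, |g (γ t) i - g y i|) * ‖d‖ := by rw [Finset.sum_mul]
        _ ≤ (M * ‖γ t - y‖) * ‖d‖ := by
            apply mul_le_mul_of_nonneg_right _ (norm_nonneg _)
            exact hLip (γ t) (hmem t ht) y hy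
        _ = M * ‖d‖ ^ 2 * t := by
            have : γ t - y = t • d := by simp [hγ]
            rw [this, norm_smul, Real.norm_eq_abs, abs_of_nonneg ht.1]
            ring
    linarith
  have hintRHS : IntervalIntegrable (fun t => L + M * ‖d‖ ^ 2 * t) MeasureTheory.volume 0 1 := by
    exact (continuous_const.add ((continuous_const).mul continuous_id)).intervalIntegrable _ _
  have hmono := intervalIntegral.integral_mono_on (by norm_num : (0:ℝ) ≤ 1) hint hintRHS hbound
  have hRHS : ∫ t in (0:ℝ)..1, (L + M * ‖d‖ ^ 2 * t) = L + M / 2 * ‖d‖ ^ 2 := by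
    have hid : IntervalIntegrable (fun x : ℝ => x) MeasureTheory.volume 0 1 :=
      continuous_id.intervalIntegrable 0 1
    rw [intervalIntegral.integral_add intervalIntegrable_const (hid.const_mul _),
      intervalIntegral.integral_const, intervalIntegral.integral_const_mul,
      integral_id]
    norm_num
    ring
  rw [heq, hRHS] at hmono
  linarith
end

section
/- Let f : ℝⁿ → ℝ be differentiable, let g = ∇f(x) at a point x, let s ∈ ℝⁿ with ‖s‖_∞ = 1 and gᵀs ≤ −ε for some ε > 0, and let p ∈ ℝⁿ with ‖p‖_∞ = δ. If σ ∈ (0,1) and δ ≤ κε/(2‖g‖₁) for some κ > 0, then for d = κs + p one has −σgᵀd ≥ (1/2)σεκ. -/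
/-- Key inequality of Theorem 4.2's proof: for `d = κs + p` with `gᵀs ≤ −ε`,
`‖s‖_∞ = 1`, `‖p‖_∞ = δ` and `δ ≤ κε/(2‖g‖₁)`, one has `−σgᵀd ≥ σεκ/2`. -/
theorem stmt_12 (n : ℕ) (g s p : Fin n → ℝ) (ε κ δ σ : ℝ)
    (hs : ‖s‖ = 1) (hgs : ∑ i, g i * s i ≤ -ε) (hε : 0 < ε)
    (hp : ‖p‖ = δ) (hσ0 : 0 < σ) (hσ1 : σ < 1) (hκ : 0 < κ)
    (hδ : δ ≤ κ * ε / (2 * ∑ i, |g i|)) :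
    -σ * ∑ i, g i * (κ * s i + p i) ≥ 1 / 2 * σ * ε * κ := by
  set G : ℝ := ∑ i, |g i| with hG
  have hG0 : 0 ≤ G := Finset.sum_nonneg fun i _ => abs_nonneg _
  have hGpos : 0 < G := by
    rcases lt_or_eq_of_le hG0 with h | h
    · exact h
    · exfalso
      have hz : ∀ i ∈ Finset.univ, |g i| = 0 := by
        intro i _
        have := (Finset.sum_eq_zero_iff_of_nonneg (fun i _ => abs_nonneg (g i))).mp h.symm
        exact this i (Finset.mem_univ i)
      have : ∑ i, g i * s i = 0 := Finset.sum_eq_zero fun i _ => by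
        have := hz i (Finset.mem_univ i)
        rw [abs_eq_zero] at this; simp [this]
      linarith
  have hgp : |∑ i, g i * p i| ≤ κ * ε / 2 := by
    calc |∑ i, g i * p i| ≤ ∑ i, |g i * p i| := Finset.abs_sum_le_sum_abs _ _
      _ ≤ ∑ i, |g i| * δ := by
          apply Finset.sum_le_sum
          intro i _
          rw [abs_mul]
          exact mul_le_mul_of_nonneg_left (hp ▸ norm_le_pi_norm p i) (abs_nonneg _)
      _ = G * δ := by rw [← Finset.sum_mul]
      _ ≤ G * (κ * ε / (2 * G)) := mul_le_mul_of_nonneg_left hδ hG0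
      _ = κ * ε / 2 := by field_simp
  have hsum : ∑ i, g i * (κ * s i + p i) = κ * (∑ i, g i * s i) + ∑ i, g i * p i := by
    rw [Finset.mul_sum, ← Finset.sum_add_distrib]
    congr 1; ext i; ring
  have h1 : κ * (∑ i, g i * s i) ≤ κ * (-ε) := mul_le_mul_of_nonneg_left hgs hκ.le
  have h2 : ∑ i, g i * p i ≤ κ * ε / 2 := (abs_le.mp hgp).2
  have : ∑ i, g i * (κ * s i + p i) ≤ -(κ * ε / 2) := by rw [hsum]; nlinarith
  nlinarith
end

section
/- Let f : ℝⁿ → ℝ be continuously differentiable, σ ∈ (0,1), and suppose at iterate x^k (feasible, not B-stationary) there exist s ∈ ℝⁿ, ‖s‖_∞ = 1, with ∇f(x^k)ᵀs ≤ −ε for ε > 0, such that Δs is feasible for LPCC(x^k, Δ). If ∇f is Lipschitz (ℓ₁–ℓ∞) with constant M near x^k and d^{k,l} solves LPCC(x^k, Δ^{k,l}), then whenever Δ^{k,l} ≤ 2(1−σ)ε/M the acceptance test f(x^k) − f(x^k + d^{k,l}) ≥ −σ∇f(x^k)ᵀd^{k,l} is satisfied. Consequently the inner loop, which halves Δ^{k,l},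 terminates after finitely many iterations. -/
/-- Lemma 4.5: if `Δˡ ≤ 2(1−σ)ε/M` then the LPCC step satisfies the acceptance
test; consequently the inner loop, which halves the radius, terminates finitely. -/
theorem stmt_14 (n : ℕ) (f : (Fin n → ℝ) → ℝ) (g : (Fin n → ℝ) → (Fin n → ℝ))
    (C : Set (Fin n → ℝ)) (x : Fin n → ℝ) (hx0 : (0 : Fin n → ℝ) ∈ C)
    (σ ε M Δ0 : ℝ) (hσ0 : 0 < σ) (hσ1 : σ < 1) (hε : 0 < ε) (hM : 0 < M)
    (hΔ0 : 0 < Δ0) (Δl : ℕ → ℝ) (hΔl : ∀ l, Δl l = Δ0 / 2 ^ l)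
    (s : Fin n → ℝ) (hs : ‖s‖ = 1) (hgs : ∑ i, g x i * s i ≤ -ε)
    (hsfeas : ∀ Δ : ℝ, 0 < Δ → Δ ≤ Δ0 → Δ • s ∈ C)
    (hderiv : ∀ z : Fin n → ℝ, ‖z - x‖ ≤ Δ0 → HasFDerivAt f
      (∑ i, g z i • (ContinuousLinearMap.proj i : (Fin n → ℝ) →L[ℝ] ℝ)) z)
    (hLip : ∀ a b : Fin n → ℝ, ‖a - x‖ ≤ Δ0 → ‖b - x‖ ≤ Δ0 →
      ∑ i, |g a i - g b i| ≤ M * ‖a - b‖)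
    (d : ℕ → Fin n → ℝ)
    (hsol : ∀ l, d l ∈ C ∧ ‖d l‖ ≤ Δl l ∧
      ∀ e ∈ C, ‖e‖ ≤ Δl l → ∑ i, g x i * d l i ≤ ∑ i, g x i * e i) :
    (∀ l, Δl l ≤ 2 * (1 - σ) * ε / M →
      f x - f (x + d l) ≥ -σ * ∑ i, g x i * d l i) ∧
    ∃ l, f x - f (x + d l) ≥ -σ * ∑ i, g x i * d l i := by
  have hΔpos : ∀ l, 0 < Δl l := by
    intro l; rw [hΔl]; positivity
  have hΔle : ∀ l, Δl l ≤ Δ0 := by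
    intro l; rw [hΔl]
    exact div_le_self hΔ0.le (one_le_pow₀ one_le_two)
  -- main claim
  have main : ∀ l, Δl l ≤ 2 * (1 - σ) * ε / M →
      f x - f (x + d l) ≥ -σ * ∑ i, g x i * d l i := by
    intro l hl
    obtain ⟨hdC, hdn, hopt⟩ := hsol l
    set Δ : ℝ := Δl l with hΔ
    set dd : Fin n → ℝ := d l with hdd
    set A : ℝ := ∑ i, g x i * dd i with hA
    -- optimality against Δ • s
    have hAle : A ≤ -ε * Δ := by
      have hmem : Δ • s ∈ C := hsfeas Δ (hΔpos l) (hΔle l)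
      have hnorm : ‖Δ • s‖ ≤ Δ := by
        rw [norm_smul, hs, mul_one, Real.norm_eq_abs, abs_of_pos (hΔpos l)]
      have := hopt _ hmem hnorm
      calc A ≤ ∑ i, g x i * (Δ • s) i := this
        _ = Δ * ∑ i, g x i * s i := by
            rw [Finset.mul_sum]; congr 1; ext i; simp [Pi.smul_apply, smul_eq_mul]; ring
        _ ≤ Δ * (-ε) := by
            exact mul_le_mul_of_nonneg_left hgs (hΔpos l).le
        _ = -ε * Δ := by ring
    -- Taylor estimate : f (x + dd) - f x - A ≤ M * ‖dd‖^2 / 2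
    have hdΔ0 : ‖dd‖ ≤ Δ0 := hdn.trans (hΔle l)
    have hderivt : ∀ t ∈ Set.Icc (0:ℝ) 1,
        HasDerivAt (fun t : ℝ => f (x + t • dd)) (∑ i, g (x + t • dd) i * dd i) t := by
      intro t ht
      have hz : ‖(x + t • dd) - x‖ ≤ Δ0 := by
        have : ‖t • dd‖ ≤ Δ0 := by
          rw [norm_smul, Real.norm_eq_abs, abs_of_nonneg ht.1]
          calc t * ‖dd‖ ≤ 1 * Δ0 := mul_le_mul ht.2 hdΔ0 (norm_nonneg _) zero_le_one
            _ = Δ0 := one_mul _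
        simpa using this
      have h1 : HasDerivAt (fun t : ℝ => x + t • dd) dd t := by
        simpa using ((hasDerivAt_id t).smul_const dd).const_add x
      have h2 := (hderiv _ hz).comp_hasDerivAt t h1
      refine h2.congr_deriv ?_
      simp [ContinuousLinearMap.sum_apply, ContinuousLinearMap.smul_apply,
        ContinuousLinearMap.proj_apply, smul_eq_mul]
    -- F t := f (x + t • dd) - f x - t * A
    set F : ℝ → ℝ := fun t => f (x + t • dd) - f x - t * A with hF
    have hF' : ∀ t ∈ Set.Icc (0:ℝ) 1,
        HasDerivAt F ((∑ i, g (x + t • dd) i * dd i) - A) t := by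
      intro t ht
      exact (by simpa using ((hderivt t ht).sub_const (f x)).sub ((hasDerivAt_id t).mul_const A) :
        HasDerivAt ((fun x_1 => f (x + x_1 • dd) - f x) - fun y => y * A) _ t)
    have hbound : ∀ t ∈ Set.Ico (0:ℝ) 1,
        ‖(∑ i, g (x + t • dd) i * dd i) - A‖ ≤ M * ‖dd‖ ^ 2 * t := by
      intro t ht
      have hz : ‖(x + t • dd) - x‖ ≤ Δ0 := by
        have : ‖t • dd‖ ≤ Δ0 := by
          rw [norm_smul, Real.norm_eq_abs, abs_of_nonneg ht.1]
          calc t * ‖dd‖ ≤ 1 * Δ0 := mul_le_mul ht.2.le hdΔ0 (norm_nonneg _) zero_le_one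
            _ = Δ0 := one_mul _
        simpa using this
      have hx' : ‖x - x‖ ≤ Δ0 := by simpa using hΔ0.le
      have hlip := hLip (x + t • dd) x hz hx'
      have hzx : ‖(x + t • dd) - x‖ = t * ‖dd‖ := by
        simp [norm_smul, Real.norm_eq_abs, abs_of_nonneg ht.1]
      rw [hzx] at hlip
      have step1 : (∑ i, g (x + t • dd) i * dd i) - A
          = ∑ i, (g (x + t • dd) i - g x i) * dd i := by
        rw [hA, ← Finset.sum_sub_distrib]; congr 1; ext i; ring
      rw [step1, Real.norm_eq_abs]
      calc |∑ i, (g (x + t • dd) i - g x i) * dd i|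
          ≤ ∑ i, |(g (x + t • dd) i - g x i) * dd i| := Finset.abs_sum_le_sum_abs _ _
        _ ≤ ∑ i, |g (x + t • dd) i - g x i| * ‖dd‖ := by
            apply Finset.sum_le_sum
            intro i _
            rw [abs_mul]
            exact mul_le_mul_of_nonneg_left ((norm_le_pi_norm dd i).trans_eq' (Real.norm_eq_abs _).symm) (abs_nonneg _)
        _ = (∑ i, |g (x + t • dd) i - g x i|) * ‖dd‖ := by rw [Finset.sum_mul]
        _ ≤ (M * (t * ‖dd‖)) * ‖dd‖ := by
            exact mul_le_mul_of_nonneg_right hlip (norm_nonneg _)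
        _ = M * ‖dd‖ ^ 2 * t := by ring
    -- the fencing theorem
    have key : ∀ t ∈ Set.Icc (0:ℝ) 1, ‖F t‖ ≤ M * ‖dd‖ ^ 2 / 2 * t ^ 2 := by
      have hB : ∀ t : ℝ, HasDerivAt (fun t : ℝ => M * ‖dd‖ ^ 2 / 2 * t ^ 2)
          (M * ‖dd‖ ^ 2 * t) t := by
        intro t
        have := (hasDerivAt_pow 2 t).const_mul (M * ‖dd‖ ^ 2 / 2)
        refine this.congr_deriv ?_
        norm_num; ring
      have hcont : ContinuousOn F (Set.Icc 0 1) := fun t ht =>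
        (hF' t ht).continuousAt.continuousWithinAt
      have ha : ‖F 0‖ ≤ M * ‖dd‖ ^ 2 / 2 * 0 ^ 2 := by simp [hF]
      exact fun t ht =>
        image_norm_le_of_norm_deriv_right_le_deriv_boundary hcont
          (fun t ht' => (hF' t (Set.Ico_subset_Icc_self ht')).hasDerivWithinAt)
          ha hB (fun t ht' => hbound t ht') ht
    have hF1 : f (x + dd) - f x - A ≤ M * ‖dd‖ ^ 2 / 2 := by
      have := key 1 (Set.mem_Icc.2 ⟨zero_le_one, le_refl 1⟩)
      rw [Real.norm_eq_abs] at this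
      have h2 : F 1 ≤ M * ‖dd‖ ^ 2 / 2 * 1 ^ 2 := (le_abs_self _).trans this
      simpa [hF] using h2
    -- combine
    have hMd : M * ‖dd‖ ^ 2 / 2 ≤ (1 - σ) * ε * Δ := by
      have h1 : ‖dd‖ ^ 2 ≤ Δ ^ 2 := pow_le_pow_left₀ (norm_nonneg _) hdn 2
      have hΔp := hΔpos l
      have hl' : M * Δ ≤ 2 * (1 - σ) * ε := by
        rw [le_div_iff₀ hM] at hl; linarith
      nlinarith [sq_nonneg Δ, mul_le_mul_of_nonneg_left h1 hM.le]
    have hεA : ε * Δ ≤ -A := by linarith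
    have hσ' : (0:ℝ) < 1 - σ := by linarith
    have hfin : f x - f (x + dd) ≥ -A - M * ‖dd‖ ^ 2 / 2 := by linarith
    have : (1 - σ) * ε * Δ ≤ (1 - σ) * (-A) := by
      have := mul_le_mul_of_nonneg_left hεA hσ'.le
      linarith
    have : f x - f (x + dd) ≥ -σ * A := by nlinarith
    simpa [hA, hdd] using this
  refine ⟨main, ?_⟩
  -- choose l large enough
  have hc : 0 < 2 * (1 - σ) * ε / M := by
    apply div_pos _ hM
    have : (0:ℝ) < 1 - σ := by linarith
    positivity
  obtain ⟨l, hlgt⟩ := pow_unbounded_of_one_lt (Δ0 / (2 * (1 - σ) * ε / M)) (one_lt_two (α := ℝ))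
  refine ⟨l, main l ?_⟩
  rw [hΔl]
  rw [div_le_iff₀ (by positivity)]
  rw [div_lt_iff₀ hc] at hlgt
  linarith
end

section
/- Let x = (x₀, x₁, x₂) be feasible for the bound-constrained MPCC and suppose there exist ε > 0 and s = (s₀, s₁, s₂) with ‖s‖_∞ = 1 such that ∇f(x)ᵀs ≤ −ε, and s satisfies: s₀ᵢ ≥ 0 whenever x₀ᵢ = ℓ₀ᵢ; s₀ᵢ ≤ 0 whenever x₀ᵢ = u₀ᵢ; s₁ᵢ = 0 whenever x₁ᵢ = 0 and x₂ᵢ > 0; s₂ᵢ = 0 whenever x₂ᵢ = 0 and x₁ᵢ > 0; and for biactive indices (x₁ᵢ = x₂ᵢ = 0), either (s₁ᵢ = 0 and s₂ᵢ ≥ 0) or (s₁ᵢ ≥ 0 and s₂ᵢ = 0). Then there exists t₀ > 0 such that x + ts is feasible for the MPCC for all t ∈ [0, t₀], and consequently x is not B-stationary. -/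
/-- Proposition 4.1 (one direction): the sign conditions make `s` a feasible
descent direction, so `x + ts` is feasible for small `t ≥ 0` and `x` is not
B-stationary. -/
theorem stmt_19 (n0 n1 : ℕ) (l u x0 g0 s0 : Fin n0 → ℝ)
    (x1 x2 g1 g2 s1 s2 : Fin n1 → ℝ) (ε : ℝ) (hε : 0 < ε)
    (hlu : ∀ i, l i < u i)
    (hb : ∀ i, l i ≤ x0 i ∧ x0 i ≤ u i)
    (hx1 : ∀ i, 0 ≤ x1 i) (hx2 : ∀ i, 0 ≤ x2 i) (hcomp : ∀ i, x1 i * x2 i = 0)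
    (hsnorm : max ‖s0‖ (max ‖s1‖ ‖s2‖) = 1)
    (hdesc : (∑ i, g0 i * s0 i) + (∑ i, g1 i * s1 i) + (∑ i, g2 i * s2 i) ≤ -ε)
    (hs0l : ∀ i, x0 i = l i → 0 ≤ s0 i)
    (hs0u : ∀ i, x0 i = u i → s0 i ≤ 0)
    (hs1 : ∀ i, x1 i = 0 → 0 < x2 i → s1 i = 0)
    (hs2 : ∀ i, x2 i = 0 → 0 < x1 i → s2 i = 0)
    (hbi : ∀ i, x1 i = 0 → x2 i = 0 →
      (s1 i = 0 ∧ 0 ≤ s2 i) ∨ (0 ≤ s1 i ∧ s2 i = 0)) :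
    (∃ t0 : ℝ, 0 < t0 ∧ ∀ t : ℝ, 0 ≤ t → t ≤ t0 →
      (∀ i, l i ≤ x0 i + t * s0 i ∧ x0 i + t * s0 i ≤ u i) ∧
      (∀ i, 0 ≤ x1 i + t * s1 i) ∧ (∀ i, 0 ≤ x2 i + t * s2 i) ∧
      (∀ i, (x1 i + t * s1 i) * (x2 i + t * s2 i) = 0)) ∧
    ¬ ∃ Δ : ℝ, 0 < Δ ∧ ∀ (d0 : Fin n0 → ℝ) (d1 d2 : Fin n1 → ℝ),
      (∀ i, l i ≤ x0 i + d0 i ∧ x0 i + d0 i ≤ u i) →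
      (∀ i, 0 ≤ x1 i + d1 i) → (∀ i, 0 ≤ x2 i + d2 i) →
      (∀ i, (x1 i + d1 i) * (x2 i + d2 i) = 0) →
      (∀ i, |d0 i| ≤ Δ) → (∀ i, |d1 i| ≤ Δ) → (∀ i, |d2 i| ≤ Δ) →
      0 ≤ (∑ i, g0 i * d0 i) + (∑ i, g1 i * d1 i) + (∑ i, g2 i * d2 i) := by
  -- componentwise bounds on s
  have hs0le : ∀ i, |s0 i| ≤ 1 := by
    intro i
    have h1 : ‖s0‖ ≤ 1 := hsnorm ▸ le_max_left _ _
    have h2 := norm_le_pi_norm s0 i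
    rw [Real.norm_eq_abs] at h2; linarith
  have hs1le : ∀ i, |s1 i| ≤ 1 := by
    intro i
    have h1 : ‖s1‖ ≤ 1 := hsnorm ▸ le_trans (le_max_left _ _) (le_max_right _ _)
    have h2 := norm_le_pi_norm s1 i
    rw [Real.norm_eq_abs] at h2; linarith
  have hs2le : ∀ i, |s2 i| ≤ 1 := by
    intro i
    have h1 : ‖s2‖ ≤ 1 := hsnorm ▸ le_trans (le_max_right _ _) (le_max_right _ _)
    have h2 := norm_le_pi_norm s2 i
    rw [Real.norm_eq_abs] at h2; linarith
  set F : (Fin n0 ⊕ Fin n1 ⊕ Unit) → ℝ := fun j =>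
    match j with
    | Sum.inl i => min (if x0 i = l i then 1 else x0 i - l i)
        (if x0 i = u i then 1 else u i - x0 i)
    | Sum.inr (Sum.inl i) => min (if x1 i = 0 then 1 else x1 i)
        (if x2 i = 0 then 1 else x2 i)
    | Sum.inr (Sum.inr _) => 1 with hF
  have hne : (Finset.univ : Finset (Fin n0 ⊕ Fin n1 ⊕ Unit)).Nonempty :=
    ⟨Sum.inr (Sum.inr ()), Finset.mem_univ _⟩
  set t0 : ℝ := Finset.univ.inf' hne F with ht0def
  have ht0le : ∀ j, t0 ≤ F j := fun j => Finset.inf'_le _ (Finset.mem_univ j)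
  have ht0pos : 0 < t0 := by
    rw [ht0def, Finset.lt_inf'_iff]
    rintro (i | i | _) _
    · have h1 := (hb i).1; have h2 := (hb i).2
      simp only [hF, lt_min_iff]
      refine ⟨?_, ?_⟩ <;> split_ifs with h
      · norm_num
      · have : l i < x0 i := lt_of_le_of_ne h1 (fun e => h e.symm); linarith
      · norm_num
      · have : x0 i < u i := lt_of_le_of_ne h2 h; linarith
    · have h1 := hx1 i; have h2 := hx2 i
      simp only [hF, lt_min_iff]
      refine ⟨?_, ?_⟩ <;> split_ifs with h
      · norm_num
      · exact lt_of_le_of_ne h1 (fun e => h e.symm)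
      · norm_num
      · exact lt_of_le_of_ne h2 (fun e => h e.symm)
    · norm_num [hF]
  -- gap facts
  have hgl : ∀ i, x0 i ≠ l i → t0 ≤ x0 i - l i := by
    intro i h
    have := le_trans (ht0le (Sum.inl i)) (min_le_left _ _)
    simpa [hF, if_neg h] using this
  have hgu : ∀ i, x0 i ≠ u i → t0 ≤ u i - x0 i := by
    intro i h
    have := le_trans (ht0le (Sum.inl i)) (min_le_right _ _)
    simpa [hF, if_neg h] using this
  have hg1 : ∀ i, x1 i ≠ 0 → t0 ≤ x1 i := by
    intro i h
    have := le_trans (ht0le (Sum.inr (Sum.inl i))) (min_le_left _ _)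
    simpa [hF, if_neg h] using this
  have hg2 : ∀ i, x2 i ≠ 0 → t0 ≤ x2 i := by
    intro i h
    have := le_trans (ht0le (Sum.inr (Sum.inl i))) (min_le_right _ _)
    simpa [hF, if_neg h] using this
  -- the feasibility statement, reusable
  have feas : ∀ t : ℝ, 0 ≤ t → t ≤ t0 →
      (∀ i, l i ≤ x0 i + t * s0 i ∧ x0 i + t * s0 i ≤ u i) ∧
      (∀ i, 0 ≤ x1 i + t * s1 i) ∧ (∀ i, 0 ≤ x2 i + t * s2 i) ∧
      (∀ i, (x1 i + t * s1 i) * (x2 i + t * s2 i) = 0) := by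
    intro t ht0' htt0
    have key1 : ∀ i, 0 ≤ x1 i + t * s1 i := by
      intro i
      by_cases h : x1 i = 0
      · by_cases h2 : x2 i = 0
        · rcases hbi i h h2 with ⟨e, _⟩ | ⟨e, _⟩
          · simp [h, e]
          · have : 0 ≤ t * s1 i := mul_nonneg ht0' e
            linarith [hx1 i]
        · have e := hs1 i h (lt_of_le_of_ne (hx2 i) (Ne.symm h2))
          simp [h, e]
      · have hg := hg1 i h
        have habs := (abs_le.1 (hs1le i)).1
        nlinarith
    have key2 : ∀ i, 0 ≤ x2 i + t * s2 i := by
      intro i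
      by_cases h : x2 i = 0
      · by_cases h2 : x1 i = 0
        · rcases hbi i h2 h with ⟨_, e⟩ | ⟨_, e⟩
          · have : 0 ≤ t * s2 i := mul_nonneg ht0' e
            linarith [hx2 i]
          · simp [h, e]
        · have e := hs2 i h (lt_of_le_of_ne (hx1 i) (Ne.symm h2))
          simp [h, e]
      · have hg := hg2 i h
        have habs := (abs_le.1 (hs2le i)).1
        nlinarith
    refine ⟨fun i => ⟨?_, ?_⟩, key1, key2, fun i => ?_⟩
    · by_cases h : x0 i = l i
      · have := mul_nonneg ht0' (hs0l i h)
        linarith [(hb i).1]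
      · have hg := hgl i h
        have habs := (abs_le.1 (hs0le i)).1
        nlinarith
    · by_cases h : x0 i = u i
      · have : t * s0 i ≤ 0 := mul_nonpos_of_nonneg_of_nonpos ht0' (hs0u i h)
        linarith [(hb i).2]
      · have hg := hgu i h
        have habs := (abs_le.1 (hs0le i)).2
        nlinarith
    · rcases mul_eq_zero.1 (hcomp i) with h | h
      · by_cases h2 : x2 i = 0
        · rcases hbi i h h2 with ⟨e, _⟩ | ⟨_, e⟩
          · simp [h, e]
          · simp [h2, e]
        · have e := hs1 i h (lt_of_le_of_ne (hx2 i) (Ne.symm h2))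
          simp [h, e]
      · by_cases h1 : x1 i = 0
        · rcases hbi i h1 h with ⟨e, _⟩ | ⟨_, e⟩
          · simp [h1, e]
          · simp [h, e]
        · have e := hs2 i h (lt_of_le_of_ne (hx1 i) (Ne.symm h1))
          simp [h, e]
  refine ⟨⟨t0, ht0pos, feas⟩, ?_⟩
  rintro ⟨Δ, hΔ, hstat⟩
  set t : ℝ := min t0 Δ with ht
  have htpos : 0 < t := lt_min ht0pos hΔ
  have htle : t ≤ t0 := min_le_left _ _
  have htΔ : t ≤ Δ := min_le_right _ _
  obtain ⟨f0, f1, f2, f3⟩ := feas t htpos.le htle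
  have habs : ∀ (m : ℕ) (s : Fin m → ℝ), (∀ i, |s i| ≤ 1) → ∀ i, |t * s i| ≤ Δ := by
    intro m s hs i
    rw [abs_mul, abs_of_pos htpos]
    calc t * |s i| ≤ t * 1 := by nlinarith [hs i]
    _ ≤ Δ := by linarith
  have := hstat (fun i => t * s0 i) (fun i => t * s1 i) (fun i => t * s2 i)
    f0 f1 f2 f3 (habs _ s0 hs0le) (habs _ s1 hs1le) (habs _ s2 hs2le)
  have hsum : (∑ i, g0 i * (t * s0 i)) + (∑ i, g1 i * (t * s1 i))
      + (∑ i, g2 i * (t * s2 i))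
      = t * ((∑ i, g0 i * s0 i) + (∑ i, g1 i * s1 i) + (∑ i, g2 i * s2 i)) := by
    rw [mul_add, mul_add, Finset.mul_sum, Finset.mul_sum, Finset.mul_sum]
    congr 1
    · congr 1 <;> exact Finset.sum_congr rfl (fun i _ => by ring)
    · exact Finset.sum_congr rfl (fun i _ => by ring)
  rw [hsum] at this
  nlinarith
end
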